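/- Let Xₙ, X be Banach spaces with pₙ ∈ L(X, Xₙ) surjective, and suppose there is a constant b such that for all xₙ ∈ Xₙ, inf{‖x‖_X : pₙ x = xₙ} ≤ b‖xₙ‖. If Aₙ ∈ L(Xₙ, Yₙ) and A ∈ L(X, Y) satisfy ‖Aₙ pₙ x − qₙ A x‖ → 0 for every x ∈ X, then the operator norms ‖Aₙ‖ are uniformly bounded in n. -/

import Mathlib

open Filter Topology

private lemma lp_single_add {E : ℕ → Type*} [∀ n, NormedAddCommGroup (E n)]
    (n : ℕ) (a b : E n) :
    lp.single (E := E) 2 n (a + b) = lp.single 2 n a + lp.single 2 n b := by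
  apply lp.ext
  funext j
  by_cases h : j = n
  · subst h
    simp [lp.single_apply_self]
  · simp [lp.single_apply_ne _ _ _ h]

private lemma lp_norm_single {E : ℕ → Type*} [∀ n, NormedAddCommGroup (E n)]
    (n : ℕ) (a : E n) : ‖lp.single (E := E) 2 n a‖ = ‖a‖ := by
  have h := lp.norm_single (E := E) (p := 2) (by norm_num)
    n a
  simpa using h

/-- The coordinate embedding `E n →L[ℂ] lp E 2` as a continuous linear map. -/
private noncomputable def lpSingleCLM (E : ℕ → Type*) [∀ n, NormedAddCommGroup (E n)]
    [∀ n, NormedSpace ℂ (E n)] (n : ℕ) : E n →L[ℂ] lp E 2 :=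
  LinearMap.mkContinuous
    { toFun := fun a => lp.single 2 n a
      map_add' := fun a b => lp_single_add n a b
      map_smul' := fun c a => lp.single_smul 2 n c a }
    1 (fun a => by simp [lp_norm_single])

private lemma lpSingleCLM_norm {E : ℕ → Type*} [∀ n, NormedAddCommGroup (E n)]
    [∀ n, NormedSpace ℂ (E n)] (n : ℕ) (a : E n) :
    ‖lpSingleCLM E n a‖ = ‖a‖ := lp_norm_single n a

/-- Theorem 2.5: with `pₙ` surjective and the lifting condition
`inf{‖x‖ : pₙ x = xₙ} ≤ b ‖xₙ‖`, pointwise convergence `‖Aₙ pₙ x - qₙ A x‖ → 0` for every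
`x ∈ X` implies uniform boundedness of the operator norms `‖Aₙ‖`. -/
theorem uniform_boundedness_from_pointwise_convergence
    {X Y : Type*} [NormedAddCommGroup X] [NormedSpace ℂ X] [CompleteSpace X]
    [NormedAddCommGroup Y] [NormedSpace ℂ Y] [CompleteSpace Y]
    {Xn Yn : ℕ → Type*} [∀ n, NormedAddCommGroup (Xn n)] [∀ n, NormedSpace ℂ (Xn n)]
    [∀ n, NormedAddCommGroup (Yn n)] [∀ n, NormedSpace ℂ (Yn n)]
    (p : ∀ n, X →L[ℂ] Xn n) (q : ∀ n, Y →L[ℂ] Yn n)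
    (hq : ∀ y : Y, Tendsto (fun n => ‖q n y‖) atTop (𝓝 ‖y‖))
    (hsurj : ∀ n, Function.Surjective (p n))
    (b : ℝ)
    (hlift : ∀ (n : ℕ) (xn : Xn n),
      sInf {c : ℝ | ∃ x : X, p n x = xn ∧ ‖x‖ = c} ≤ b * ‖xn‖)
    (A : ∀ n, Xn n →L[ℂ] Yn n) (A₀ : X →L[ℂ] Y)
    (hpt : ∀ x : X, Tendsto (fun n => ‖A n (p n x) - q n (A₀ x)‖) atTop (𝓝 0)) :
    ∃ C : ℝ, ∀ n, ‖A n‖ ≤ C := by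
  -- Embed everything into the common codomain `lp Yn 2`.
  set g : ℕ → X →L[ℂ] lp Yn 2 :=
    fun n => (lpSingleCLM Yn n).comp ((A n).comp (p n)) with hg
  -- pointwise boundedness of `g`
  have hbd : ∀ x : X, ∃ C, ∀ n, ‖g n x‖ ≤ C := by
    intro x
    have h1 : Tendsto (fun n => ‖A n (p n x) - q n (A₀ x)‖ + ‖q n (A₀ x)‖)
        atTop (𝓝 (0 + ‖A₀ x‖)) := (hpt x).add (hq (A₀ x))
    obtain ⟨C, hC⟩ := h1.bddAbove_range
    refine ⟨C, fun n => ?_⟩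
    have : ‖g n x‖ = ‖A n (p n x)‖ := lpSingleCLM_norm n _
    rw [this]
    calc ‖A n (p n x)‖ ≤ ‖A n (p n x) - q n (A₀ x)‖ + ‖q n (A₀ x)‖ := by
          have := norm_add_le (A n (p n x) - q n (A₀ x)) (q n (A₀ x))
          simpa using this
      _ ≤ C := hC (Set.mem_range_self n)
  obtain ⟨C, hC⟩ := banach_steinhaus hbd
  have hC0 : 0 ≤ C := le_trans (norm_nonneg _) (hC 0)
  refine ⟨max (C * b) 0, fun n => ?_⟩
  refine ContinuousLinearMap.opNorm_le_bound _ (le_max_right _ _) (fun xn => ?_)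
  -- key pointwise estimate
  have key : ‖A n xn‖ ≤ C * b * ‖xn‖ := by
    have hne : {c : ℝ | ∃ x : X, p n x = xn ∧ ‖x‖ = c}.Nonempty := by
      obtain ⟨x, hx⟩ := hsurj n xn
      exact ⟨‖x‖, x, hx, rfl⟩
    refine le_of_forall_pos_le_add (fun ε hε => ?_)
    have hε' : 0 < ε / (C + 1) := div_pos hε (by linarith)
    obtain ⟨c, hc, hclt⟩ := Real.lt_sInf_add_pos hne hε'
    obtain ⟨x, hpx, hxc⟩ := hc
    have hxle : ‖x‖ ≤ b * ‖xn‖ + ε / (C + 1) := by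
      have := hlift n xn
      calc ‖x‖ = c := hxc
        _ ≤ b * ‖xn‖ + ε / (C + 1) := by linarith
    have h1 : ‖g n x‖ = ‖A n (p n x)‖ := lpSingleCLM_norm n _
    rw [hpx] at h1
    have h2 : ‖g n x‖ ≤ C * ‖x‖ := (g n).le_opNorm x |>.trans
      (mul_le_mul_of_nonneg_right (hC n) (norm_nonneg x))
    have h3 : C * ‖x‖ ≤ C * (b * ‖xn‖ + ε / (C + 1)) :=
      mul_le_mul_of_nonneg_left hxle hC0
    have h4 : C * (ε / (C + 1)) ≤ ε := by
      rw [← mul_div_assoc, div_le_iff₀ (by linarith : (0:ℝ) < C + 1)]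
      nlinarith
    calc ‖A n xn‖ = ‖g n x‖ := h1.symm
      _ ≤ C * ‖x‖ := h2
      _ ≤ C * (b * ‖xn‖ + ε / (C + 1)) := h3
      _ = C * b * ‖xn‖ + C * (ε / (C + 1)) := by ring
      _ ≤ C * b * ‖xn‖ + ε := by linarith [h4]
  calc ‖A n xn‖ ≤ C * b * ‖xn‖ := key
    _ ≤ max (C * b) 0 * ‖xn‖ :=
      mul_le_mul_of_nonneg_right (le_max_left _ _) (norm_nonneg _)
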